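/- For s ≥ 3 and t ≥ 1, the graph K_{s,s}^− ⊛ J_t is a connected (st−1)-regular graph on 2st vertices with spectrum {[st−1]^1, [−st+2t−1]^1, [2t−1]^{s−1}, [−1]^{2st−s−1}}. -/

import Mathlib

open Polynomial

noncomputable def adjm {V : Type*} [Fintype V] [DecidableEq V] (G : SimpleGraph V) :
    Matrix V V ℝ :=
  @SimpleGraph.adjMatrix ℝ V G (Classical.decRel _) _ _

/-- The adjacency spectrum of `G`, as a multiset of real roots of the
characteristic polynomial (so multiplicities are counted). -/
noncomputable def spec {V : Type*} [Fintype V] [DecidableEq V] (G : SimpleGraph V) :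
    Multiset ℝ :=
  (adjm G).charpoly.roots

/-- `G` is `k`-regular: every vertex has exactly `k` neighbours. -/
def IsReg {V : Type*} (G : SimpleGraph V) (k : ℕ) : Prop :=
  ∀ v : V, (G.neighborSet v).ncard = k
/-- The clique blow-up `G ⊛ J_t`. -/
def blowup {V : Type*} (G : SimpleGraph V) (t : ℕ) : SimpleGraph (V × Fin t) where
  Adj x y := G.Adj x.1 y.1 ∨ (x.1 = y.1 ∧ x.2 ≠ y.2)
  symm := ⟨by
    rintro ⟨u, i⟩ ⟨v, j⟩ (h | ⟨h, hij⟩)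
    · exact Or.inl h.symm
    · exact Or.inr ⟨h.symm, hij.symm⟩⟩
  loopless := ⟨by rintro ⟨u, i⟩ (h | ⟨-, h⟩) <;> simp_all⟩

/-- `K_{s,s}⁻`: the complete bipartite graph `K_{s,s}` minus a perfect matching. -/
def KssMinus (s : ℕ) : SimpleGraph (Fin s ⊕ Fin s) where
  Adj x y :=
    match x, y with
    | .inl i, .inr j => i ≠ j
    | .inr i, .inl j => i ≠ j
    | _, _ => False
  symm := ⟨by rintro (i | i) (j | j) h <;> simp_all <;> exact fun e => h e.symm⟩
  loopless := ⟨by rintro (i | i) h <;> simp_all⟩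

open Matrix

section generic
variable {n R : Type*} [Fintype n] [DecidableEq n] [CommRing R]

lemma charpoly_conj (P M : Matrix n n R) [Invertible P] :
    (P * M * ⅟P).charpoly = M.charpoly := by
  have hPc : (P.map C) * ((⅟P).map C) = (1 : Matrix n n R[X]) := by
    rw [← Matrix.map_mul, mul_invOf_self, Matrix.map_one _ (map_zero C) (map_one C)]
  have hcomm : Commute (Matrix.scalar n (X : R[X])) (P.map C) :=
    scalar_commute _ (fun r => Commute.all _ _) _
  have hc : charmatrix (P * M * ⅟P) = (P.map C) * charmatrix M * ((⅟P).map C) := by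
    simp only [charmatrix, RingHom.mapMatrix_apply, Matrix.mul_sub, Matrix.sub_mul,
      Matrix.map_mul]
    congr 1
    rw [← hcomm.eq, Matrix.mul_assoc, hPc, Matrix.mul_one]
  rw [Matrix.charpoly, hc, det_mul, det_mul, Matrix.charpoly]
  have : (P.map C).det * ((⅟P).map C).det = 1 := by
    rw [← det_mul, hPc, det_one]
  calc (P.map C).det * (charmatrix M).det * ((⅟P).map C).det
      = (charmatrix M).det * ((P.map C).det * ((⅟P).map C).det) := by ring
    _ = (charmatrix M).det := by rw [this, mul_one]

lemma charpoly_diagonal (d : n → R) :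
    (Matrix.diagonal d).charpoly = ∏ i, (X - C (d i)) := by
  have : charmatrix (Matrix.diagonal d) = Matrix.diagonal fun i => (X : R[X]) - C (d i) := by
    ext i j
    by_cases h : i = j
    · subst h; simp
    · simp [Matrix.diagonal_apply_ne _ h, charmatrix_apply_ne _ _ _ h]
  rw [Matrix.charpoly, this, Matrix.det_diagonal]

lemma roots_charpoly_diagonal (d : n → ℝ) :
    (Matrix.diagonal d).charpoly.roots = (Finset.univ.val.map d) := by
  rw [_root_.charpoly_diagonal]
  have : ∏ i, ((X : ℝ[X]) - C (d i)) = ((Finset.univ.val.map d).map fun a => X - C a).prod := by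
    rw [Multiset.map_map]; rfl
  rw [this, Polynomial.roots_multiset_prod_X_sub_C]

end generic

noncomputable section blocks
variable (s : ℕ) [NeZero s]

/-- eigenbasis matrix for the all-ones block: col 0 = all ones, col k = e_k - e_0 -/
def Smat : Matrix (Fin s) (Fin s) ℝ := Matrix.of fun i k =>
  if k = 0 then 1 else (if i = k then 1 else 0) - (if i = 0 then 1 else 0)

def Sinv : Matrix (Fin s) (Fin s) ℝ := Matrix.of fun k j =>
  if k = 0 then (s : ℝ)⁻¹ else (if k = j then 1 else 0) - (s : ℝ)⁻¹

def Jmat : Matrix (Fin s) (Fin s) ℝ := Matrix.of fun _ _ => 1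

def Emat : Matrix (Fin s) (Fin s) ℝ := Matrix.diagonal fun k => if k = 0 then (s : ℝ) else 0

lemma Smat_col_sum (j : Fin s) :
    ∑ i, Smat s i j = if j = 0 then (s : ℝ) else 0 := by
  by_cases h : j = 0
  · subst h; simp [Smat]
  · simp only [Smat, of_apply, if_neg h, Finset.sum_sub_distrib]
    rw [Finset.sum_ite_eq' Finset.univ j (fun _ => (1:ℝ)),
        Finset.sum_ite_eq' Finset.univ 0 (fun _ => (1:ℝ))]
    simp [h]

lemma Sinv_mul_Smat : Sinv s * Smat s = 1 := by
  have hs : 0 < s := Nat.pos_of_ne_zero (NeZero.ne s)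
  have hsne : (s : ℝ) ≠ 0 := Nat.cast_ne_zero.mpr hs.ne'
  ext k j
  rw [Matrix.mul_apply]
  by_cases hk : k = 0
  · subst hk
    have : ∀ i, Sinv s 0 i * Smat s i j = (s:ℝ)⁻¹ * Smat s i j := by
      intro i; simp [Sinv]
    rw [Finset.sum_congr rfl fun i _ => this i, ← Finset.mul_sum, Smat_col_sum]
    by_cases hj : j = 0
    · subst hj; simp [inv_mul_cancel₀ hsne]
    · simp [hj, Matrix.one_apply, Ne.symm hj]
  · have step : ∀ i, Sinv s k i * Smat s i j
        = (if k = i then 1 else 0) * Smat s i j - (s:ℝ)⁻¹ * Smat s i j := by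
      intro i; simp [Sinv, if_neg hk, sub_mul]
    rw [Finset.sum_congr rfl fun i _ => step i, Finset.sum_sub_distrib, ← Finset.mul_sum,
      Smat_col_sum]
    have : ∑ i, (if k = i then (1:ℝ) else 0) * Smat s i j = Smat s k j := by
      simp [ite_mul]
    rw [this]
    by_cases hj : j = 0
    · subst hj
      simp [Smat, hk, Matrix.one_apply, inv_mul_cancel₀ hsne]
    · simp [Smat, hj, hk, Matrix.one_apply, Ne.symm, eq_comm]

lemma Jmat_mul_Smat : Jmat s * Smat s = Smat s * Emat s := by
  ext i j
  rw [Matrix.mul_apply, Emat, Matrix.mul_diagonal]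
  have : ∀ k, Jmat s i k * Smat s k j = Smat s k j := by intro k; simp [Jmat]
  rw [Finset.sum_congr rfl fun k _ => this k, Smat_col_sum]
  by_cases hj : j = 0 <;> simp [hj, Smat]



-- Q level
variable (s : ℕ) [NeZero s]

def Dmat : Matrix (Fin s) (Fin s) ℝ := Matrix.diagonal fun k => if k = 0 then (1:ℝ) else -1

def Qmat : Matrix (Fin s ⊕ Fin s) (Fin s ⊕ Fin s) ℝ :=
  Matrix.fromBlocks (Smat s) (Smat s) (Smat s * Dmat s) (-(Smat s * Dmat s))

def Qinv : Matrix (Fin s ⊕ Fin s) (Fin s ⊕ Fin s) ℝ :=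
  (2:ℝ)⁻¹ • Matrix.fromBlocks (Sinv s) (Dmat s * Sinv s) (Sinv s) (-(Dmat s * Sinv s))

lemma Dmat_mul_Dmat : Dmat s * Dmat s = 1 := by
  rw [Dmat, Matrix.diagonal_mul_diagonal]
  rw [show (fun k : Fin s => (if k = 0 then (1:ℝ) else -1) * (if k = 0 then (1:ℝ) else -1))
      = fun _ => 1 from funext fun k => by split <;> norm_num, Matrix.diagonal_one]

lemma Qinv_mul_Qmat : Qinv s * Qmat s = 1 := by
  rw [Qinv, Qmat, Matrix.smul_mul, Matrix.fromBlocks_multiply]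
  have h1 : Sinv s * Smat s = 1 := Sinv_mul_Smat s
  have h2 : (Dmat s * Sinv s) * (Smat s * Dmat s) = 1 := by
    rw [Matrix.mul_assoc, ← Matrix.mul_assoc (Sinv s), h1, Matrix.one_mul, Dmat_mul_Dmat]
  rw [Matrix.mul_neg, Matrix.neg_mul, Matrix.neg_mul, Matrix.mul_neg, neg_neg, h1, h2]
  rw [show (1:Matrix (Fin s) (Fin s) ℝ) + 1 = (2:ℝ) • 1 by rw [two_smul]]
  rw [add_neg_cancel, Matrix.fromBlocks_smul, smul_smul, smul_zero]
  norm_num [Matrix.fromBlocks_one]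

-- eigen equation for A + 1
def Nu1 : Fin s → ℝ := fun k => if k = 0 then (s:ℝ) else 2
def Nu2 : Fin s → ℝ := fun k => if k = 0 then 2 - (s:ℝ) else 0

def A1 : Matrix (Fin s ⊕ Fin s) (Fin s ⊕ Fin s) ℝ :=
  Matrix.fromBlocks 1 (Jmat s - 1) (Jmat s - 1) 1

lemma diag_nu1 : Matrix.diagonal (Nu1 s) = 1 + (Emat s - 1) * Dmat s := by
  rw [Emat, Dmat, Matrix.sub_mul, Matrix.diagonal_mul_diagonal, Matrix.one_mul]
  ext i j
  by_cases h : i = j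
  · subst h
    simp only [Matrix.diagonal_apply_eq, Matrix.add_apply, Matrix.sub_apply,
      Matrix.one_apply_eq, Nu1]
    split_ifs <;> ring
  · simp [Matrix.diagonal_apply_ne _ h, Matrix.one_apply_ne h]

lemma diag_nu2 : Matrix.diagonal (Nu2 s) = 1 - (Emat s - 1) * Dmat s := by
  rw [Emat, Dmat, Matrix.sub_mul, Matrix.diagonal_mul_diagonal, Matrix.one_mul]
  ext i j
  by_cases h : i = j
  · subst h
    simp only [Matrix.diagonal_apply_eq, Matrix.add_apply, Matrix.sub_apply,
      Matrix.one_apply_eq, Nu2]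
    split_ifs <;> ring
  · simp [Matrix.diagonal_apply_ne _ h, Matrix.one_apply_ne h]

lemma Dmat_mul_nu1 : Dmat s * Matrix.diagonal (Nu1 s) = Emat s - 1 + Dmat s := by
  rw [Dmat, Emat, Matrix.diagonal_mul_diagonal]
  ext i j
  by_cases h : i = j
  · subst h
    simp only [Matrix.diagonal_apply_eq, Matrix.add_apply, Matrix.sub_apply,
      Matrix.one_apply_eq, Nu1]
    split_ifs <;> ring
  · simp [Matrix.diagonal_apply_ne _ h, Matrix.one_apply_ne h]

lemma Dmat_mul_nu2 : Dmat s * Matrix.diagonal (Nu2 s) = -(Emat s - 1) + Dmat s := by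
  rw [Dmat, Emat, Matrix.diagonal_mul_diagonal]
  ext i j
  by_cases h : i = j
  · subst h
    simp only [Matrix.diagonal_apply_eq, Matrix.add_apply, Matrix.sub_apply,
      Matrix.neg_apply, Matrix.one_apply_eq, Nu2]
    split_ifs <;> ring
  · simp [Matrix.diagonal_apply_ne _ h, Matrix.one_apply_ne h]

lemma A1_mul_Qmat : A1 s * Qmat s
    = Qmat s * Matrix.fromBlocks (Matrix.diagonal (Nu1 s)) 0 0 (Matrix.diagonal (Nu2 s)) := by
  have hJS : (Jmat s - 1) * Smat s = Smat s * (Emat s - 1) := by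
    rw [Matrix.sub_mul, Matrix.mul_sub, Jmat_mul_Smat, Matrix.one_mul, Matrix.mul_one]
  have hTL : 1 * Smat s + (Jmat s - 1) * (Smat s * Dmat s)
      = Smat s * Matrix.diagonal (Nu1 s) + Smat s * (0 : Matrix (Fin s) (Fin s) ℝ) := by
    rw [Matrix.mul_zero, add_zero, Matrix.one_mul, ← Matrix.mul_assoc, hJS, diag_nu1,
      Matrix.mul_add, Matrix.mul_one, Matrix.mul_assoc]
  have hTR : 1 * Smat s + (Jmat s - 1) * -(Smat s * Dmat s)
      = Smat s * (0 : Matrix (Fin s) (Fin s) ℝ) + Smat s * Matrix.diagonal (Nu2 s) := by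
    rw [Matrix.mul_zero, zero_add, Matrix.one_mul, Matrix.mul_neg, ← Matrix.mul_assoc, hJS,
      diag_nu2]
    simp only [Matrix.mul_sub, Matrix.sub_mul, Matrix.mul_one, Matrix.one_mul,
      ← Matrix.mul_assoc]
    abel
  have hBL : (Jmat s - 1) * Smat s + 1 * (Smat s * Dmat s)
      = Smat s * Dmat s * Matrix.diagonal (Nu1 s)
        + -(Smat s * Dmat s) * (0 : Matrix (Fin s) (Fin s) ℝ) := by
    rw [Matrix.neg_mul, Matrix.mul_zero, neg_zero, add_zero, Matrix.one_mul, hJS,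
      Matrix.mul_assoc, Dmat_mul_nu1, Matrix.mul_add]
  have hBR : (Jmat s - 1) * Smat s + 1 * -(Smat s * Dmat s)
      = Smat s * Dmat s * (0 : Matrix (Fin s) (Fin s) ℝ)
        + -(Smat s * Dmat s) * Matrix.diagonal (Nu2 s) := by
    rw [Matrix.mul_zero, zero_add, Matrix.one_mul, hJS, Matrix.neg_mul,
      Matrix.mul_assoc, Dmat_mul_nu2, Matrix.mul_add, Matrix.mul_neg]
    abel
  rw [A1, Qmat, Matrix.fromBlocks_multiply, Matrix.fromBlocks_multiply, hTL, hTR, hBL, hBR]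

open Kronecker

-- the blow-up adjacency matrix

lemma adjm_blowup {V : Type*} [Fintype V] [DecidableEq V] (G : SimpleGraph V) (t : ℕ) :
    adjm (blowup G t) = (adjm G + 1) ⊗ₖ Jmat t - 1 := by
  ext ⟨x, i⟩ ⟨y, j⟩
  simp only [adjm, SimpleGraph.adjMatrix_apply]
  simp only [Matrix.sub_apply, Matrix.add_apply,
    Matrix.kroneckerMap_apply, Jmat, of_apply, Matrix.one_apply, blowup, Prod.mk.injEq]
  by_cases hxy : x = y
  · subst hxy
    by_cases hij : i = j
    · subst hij; simp [SimpleGraph.irrefl]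
    · simp [hij, SimpleGraph.irrefl G]
  · simp [hxy]
    by_cases hadj : G.Adj x y <;> simp [hadj, hxy]


section assembly
variable (s t : ℕ) [NeZero s] [NeZero t]

lemma adjm_Kss : adjm (KssMinus s) + 1 = A1 s := by
  ext x y
  rcases x with i | i <;> rcases y with j | j <;>
    simp only [adjm, Matrix.add_apply, SimpleGraph.adjMatrix_apply] <;> simp only [Matrix.add_apply, A1,
      Matrix.fromBlocks_apply₁₁, Matrix.fromBlocks_apply₁₂, Matrix.fromBlocks_apply₂₁,
      Matrix.fromBlocks_apply₂₂, Matrix.sub_apply, Jmat, of_apply, Matrix.one_apply,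
      KssMinus, Sum.inl.injEq, Sum.inr.injEq] <;>
    [skip; skip; skip; skip] <;> by_cases h : i = j <;> simp [h]

noncomputable def Pmat : Matrix ((Fin s ⊕ Fin s) × Fin t) ((Fin s ⊕ Fin s) × Fin t) ℝ :=
  Qmat s ⊗ₖ Smat t

noncomputable def PmatInv : Matrix ((Fin s ⊕ Fin s) × Fin t) ((Fin s ⊕ Fin s) × Fin t) ℝ :=
  Qinv s ⊗ₖ Sinv t

lemma PmatInv_mul_Pmat : PmatInv s t * Pmat s t = 1 := by
  rw [PmatInv, Pmat, ← Matrix.mul_kronecker_mul, Qinv_mul_Qmat, Sinv_mul_Smat,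
    Matrix.one_kronecker_one]

def dfun : (Fin s ⊕ Fin s) × Fin t → ℝ := fun p =>
  Sum.elim (Nu1 s) (Nu2 s) p.1 * (if p.2 = 0 then (t : ℝ) else 0) - 1

lemma M_mul_Pmat :
    adjm (blowup (KssMinus s) t) * Pmat s t
      = Pmat s t * Matrix.diagonal (dfun s t) := by
  rw [adjm_blowup, adjm_Kss, Matrix.sub_mul, Matrix.one_mul, Pmat,
    ← Matrix.mul_kronecker_mul, A1_mul_Qmat, Jmat_mul_Smat, Matrix.mul_kronecker_mul]
  have hdiag : (Matrix.fromBlocks (Matrix.diagonal (Nu1 s)) 0 0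
        (Matrix.diagonal (Nu2 s))) ⊗ₖ Emat t - 1
      = Matrix.diagonal (dfun s t) := by
    rw [Matrix.fromBlocks_diagonal, Emat, Matrix.diagonal_kronecker_diagonal,
      ← Matrix.diagonal_one, Matrix.diagonal_sub]
    rfl
  rw [← hdiag, Matrix.mul_sub, Matrix.mul_one]

lemma charpoly_M :
    (adjm (blowup (KssMinus s) t)).charpoly.roots
      = Finset.univ.val.map (dfun s t) := by
  haveI : Invertible (Pmat s t) :=
    invertibleOfLeftInverse _ _ (PmatInv_mul_Pmat s t)
  have hM : adjm (blowup (KssMinus s) t)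
      = Pmat s t * Matrix.diagonal (dfun s t) * ⅟(Pmat s t) := by
    rw [← M_mul_Pmat, Matrix.mul_assoc, mul_invOf_self, Matrix.mul_one]
  rw [hM, charpoly_conj, roots_charpoly_diagonal]

end assembly


lemma bind_const' {α β : Type*} (s : Multiset α) (m : Multiset β) :
    s.bind (fun _ => m) = (Multiset.card s) • m := by
  induction s using Multiset.induction_on with
  | empty => simp
  | cons a s ih => simp [Multiset.cons_bind, ih, add_smul, one_smul, add_comm]

lemma map_univ_prod {α β γ : Type*} [Fintype α] [Fintype β] (f : α × β → γ) :
    (Finset.univ : Finset (α × β)).val.map f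
      = (Finset.univ : Finset α).val.bind
          (fun a => (Finset.univ : Finset β).val.map fun b => f (a, b)) := by
  rw [← Finset.univ_product_univ, Finset.product_val]
  show Multiset.map f (Multiset.product _ _) = _
  rw [Multiset.product, Multiset.map_bind]
  simp [Multiset.map_map, Function.comp]

lemma map_univ_sum {α β γ : Type*} [Fintype α] [Fintype β] (f : α ⊕ β → γ) :
    (Finset.univ : Finset (α ⊕ β)).val.map f
      = (Finset.univ : Finset α).val.map (fun a => f (Sum.inl a))
        + (Finset.univ : Finset β).val.map (fun b => f (Sum.inr b)) := by
  rw [← Finset.univ_disjSum_univ]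
  show Multiset.map f (Multiset.map Sum.inl Finset.univ.val + Multiset.map Sum.inr Finset.univ.val) = _
  simp [Multiset.map_map, Function.comp]

lemma map_univ_fin_ite {t : ℕ} [NeZero t] (c : ℝ) :
    (Finset.univ : Finset (Fin t)).val.map (fun k => if k = 0 then c else (-1 : ℝ))
      = c ::ₘ Multiset.replicate (t - 1) (-1 : ℝ) := by
  have h0 : (0 : Fin t) ∈ (Finset.univ : Finset (Fin t)).val := Finset.mem_univ_val _
  rw [← Multiset.cons_erase h0, Multiset.map_cons, if_pos rfl]
  congr 1
  have hcong : ∀ k ∈ ((Finset.univ : Finset (Fin t)).val.erase 0),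
      (if k = 0 then c else (-1:ℝ)) = -1 := by
    intro k hk
    have hne : k ≠ 0 := ((Finset.univ.nodup.mem_erase_iff).mp hk).1
    simp [hne]
  rw [Multiset.map_congr rfl hcong, Multiset.map_const']
  congr 1
  rw [Multiset.card_erase_of_mem h0]
  simp

lemma bind_univ_fin_ite {n : ℕ} [NeZero n] (m₀ m₁ : Multiset ℝ) :
    (Finset.univ : Finset (Fin n)).val.bind (fun i => if i = 0 then m₀ else m₁)
      = m₀ + (n - 1) • m₁ := by
  have h0 : (0 : Fin n) ∈ (Finset.univ : Finset (Fin n)).val := Finset.mem_univ_val _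
  rw [← Multiset.cons_erase h0, Multiset.cons_bind, if_pos rfl]
  congr 1
  have hc : (Finset.univ.val.erase (0 : Fin n)).bind (fun i => if i = 0 then m₀ else m₁)
      = (Finset.univ.val.erase (0 : Fin n)).bind (fun _ => m₁) :=
    Multiset.bind_congr (fun k hk => by
      have hne : k ≠ 0 := ((Finset.univ.nodup.mem_erase_iff).mp hk).1
      simp [hne])
  rw [hc, bind_const', Multiset.card_erase_of_mem h0]
  congr 1
  simp

lemma bind_univ_sum {α β : Type*} [Fintype α] [Fintype β] (g : α ⊕ β → Multiset ℝ) :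
    (Finset.univ : Finset (α ⊕ β)).val.bind g
      = (Finset.univ : Finset α).val.bind (fun a => g (Sum.inl a))
        + (Finset.univ : Finset β).val.bind (fun b => g (Sum.inr b)) := by
  rw [← Finset.univ_disjSum_univ]
  show (Multiset.map Sum.inl Finset.univ.val + Multiset.map Sum.inr Finset.univ.val).bind g = _
  rw [Multiset.add_bind, Multiset.bind_map, Multiset.bind_map]


lemma dfun_multiset (s t : ℕ) [NeZero s] [NeZero t] (hs : 3 ≤ s) (ht : 1 ≤ t) :
    Finset.univ.val.map (dfun s t)
      = ({((s : ℝ) * t - 1 : ℝ), (-(s : ℝ) * t + 2 * t - 1 : ℝ)} :  Multiset ℝ)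
        + Multiset.replicate (s - 1) (2 * (t : ℝ) - 1)
        + Multiset.replicate (2 * s * t - s - 1) (-1 : ℝ) := by
  rw [map_univ_prod]
  have hinner : ∀ x : Fin s ⊕ Fin s,
      (Finset.univ : Finset (Fin t)).val.map (fun k => dfun s t (x, k))
        = (Sum.elim (Nu1 s) (Nu2 s) x * t - 1) ::ₘ Multiset.replicate (t - 1) (-1 : ℝ) := by
    intro x
    rw [← map_univ_fin_ite (Sum.elim (Nu1 s) (Nu2 s) x * t - 1)]
    apply Multiset.map_congr rfl
    intro k _
    by_cases hk : k = 0 <;> simp [dfun, hk]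
  rw [Multiset.bind_congr (fun x _ => hinner x), bind_univ_sum]
  have h1 : (fun i : Fin s => (Sum.elim (Nu1 s) (Nu2 s) (Sum.inl i) * t - 1)
        ::ₘ Multiset.replicate (t - 1) (-1 : ℝ))
      = fun i : Fin s => if i = 0
          then ((s : ℝ) * t - 1) ::ₘ Multiset.replicate (t - 1) (-1 : ℝ)
          else (2 * (t : ℝ) - 1) ::ₘ Multiset.replicate (t - 1) (-1 : ℝ) := by
    funext i; by_cases h : i = 0 <;> simp [Nu1, h] <;> ring_nf
  have h2 : (fun i : Fin s => (Sum.elim (Nu1 s) (Nu2 s) (Sum.inr i) * t - 1)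
        ::ₘ Multiset.replicate (t - 1) (-1 : ℝ))
      = fun i : Fin s => if i = 0
          then (-(s : ℝ) * t + 2 * t - 1) ::ₘ Multiset.replicate (t - 1) (-1 : ℝ)
          else Multiset.replicate t (-1 : ℝ) := by
    funext i
    by_cases h : i = 0
    · subst h
      rw [if_pos rfl]
      have hv : (Nu1 s ⊕ᵥ Nu2 s) (Sum.inr (0 : Fin s)) * (t : ℝ) - 1
          = -(s : ℝ) * t + 2 * t - 1 := by simp [Nu2]; ring
      rw [hv]
    · rw [if_neg h]
      have hv : (Nu1 s ⊕ᵥ Nu2 s) (Sum.inr i) * (t : ℝ) - 1 = -1 := by simp [Nu2, h]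
      rw [hv]
      conv_rhs => rw [show t = (t - 1) + 1 from by omega]
      rw [Multiset.replicate_succ]
  rw [h1, h2, bind_univ_fin_ite, bind_univ_fin_ite]
  simp only [← Multiset.singleton_add, smul_add, Multiset.nsmul_singleton,
    Multiset.nsmul_replicate]
  rw [show ({((s : ℝ) * t - 1 : ℝ), (-(s : ℝ) * t + 2 * t - 1 : ℝ)} : Multiset ℝ)
      = {((s : ℝ) * t - 1 : ℝ)} + {(-(s : ℝ) * t + 2 * t - 1 : ℝ)} from rfl]
  rw [show 2 * s * t - s - 1
      = (t - 1) + ((s - 1) * (t - 1)) + ((t - 1) + (s - 1) * t) from by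
        obtain ⟨u, rfl⟩ : ∃ u, s = u + 1 := ⟨s - 1, by omega⟩
        obtain ⟨v, rfl⟩ : ∃ v, t = v + 1 := ⟨t - 1, by omega⟩
        simp only [Nat.add_sub_cancel]
        have hL : 2 * (u + 1) * (v + 1) = 2 * (u * v) + 2 * u + 2 * v + 2 := by ring
        have hR : u * (v + 1) = u * v + u := by ring
        rw [hL, hR]
        omega]
  rw [Multiset.replicate_add, Multiset.replicate_add, Multiset.replicate_add]
  abel


section graphside
variable (s t : ℕ)

lemma reach_inl_hub (hs : 3 ≤ s) (ht : 1 ≤ t) (i : Fin s) (b : Fin t) :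
    (blowup (KssMinus s) t).Reachable (Sum.inl i, b) (Sum.inl ⟨0, by omega⟩, (⟨0, by omega⟩ : Fin t)) := by
  set k : Fin s := if i = ⟨1, by omega⟩ then ⟨2, by omega⟩ else ⟨1, by omega⟩ with hk
  have hki : i ≠ k := by
    by_cases h : i = ⟨1, by omega⟩ <;> simp [hk, h, Fin.ext_iff] <;> omega
  have hk0 : k ≠ ⟨0, by omega⟩ := by
    by_cases h : i = ⟨1, by omega⟩ <;> simp [hk, h, Fin.ext_iff]
  have h1 : (blowup (KssMinus s) t).Adj (Sum.inl i, b) (Sum.inr k, (⟨0, by omega⟩ : Fin t)) :=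
    Or.inl hki
  have h2 : (blowup (KssMinus s) t).Adj (Sum.inr k, (⟨0, by omega⟩ : Fin t))
      (Sum.inl ⟨0, by omega⟩, (⟨0, by omega⟩ : Fin t)) := Or.inl hk0
  exact h1.reachable.trans h2.reachable

lemma reach_inr_hub (hs : 3 ≤ s) (ht : 1 ≤ t) (j : Fin s) (b : Fin t) :
    (blowup (KssMinus s) t).Reachable (Sum.inr j, b) (Sum.inl ⟨0, by omega⟩, (⟨0, by omega⟩ : Fin t)) := by
  set m : Fin s := if j = ⟨0, by omega⟩ then ⟨1, by omega⟩ else ⟨0, by omega⟩ with hm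
  have hjm : j ≠ m := by
    by_cases h : j = ⟨0, by omega⟩ <;> simp [hm, h, Fin.ext_iff] <;> omega
  have h1 : (blowup (KssMinus s) t).Adj (Sum.inr j, b) (Sum.inl m, b) := Or.inl hjm
  exact h1.reachable.trans (reach_inl_hub s t hs ht m b)

lemma blowup_conn (hs : 3 ≤ s) (ht : 1 ≤ t) : (blowup (KssMinus s) t).Connected := by
  rw [SimpleGraph.connected_iff]
  refine ⟨fun u v => ?_, ⟨(Sum.inl ⟨0, by omega⟩, (⟨0, by omega⟩ : Fin t))⟩⟩
  have key : ∀ p : (Fin s ⊕ Fin s) × Fin t,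
      (blowup (KssMinus s) t).Reachable p (Sum.inl ⟨0, by omega⟩, (⟨0, by omega⟩ : Fin t)) := by
    rintro ⟨x | x, b⟩
    · exact reach_inl_hub s t hs ht x b
    · exact reach_inr_hub s t hs ht x b
  exact (key u).trans (key v).symm

lemma reg_aux {V : Type*} [Fintype V] [DecidableEq V] (G : SimpleGraph V) (t : ℕ)
    (x : V) (a : Fin t) (N : Finset V) (hxN : x ∉ N) (hmem : ∀ y, y ∈ N ↔ G.Adj x y) :
    ((blowup G t).neighborSet (x, a)).ncard = N.card * t + (t - 1) := by
  classical
  have hset : (blowup G t).neighborSet (x, a)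
      = ↑((N ×ˢ (Finset.univ : Finset (Fin t))) ∪ ({x} ×ˢ Finset.univ.erase a)) := by
    ext ⟨y, b⟩
    constructor
    · rintro (hadj | ⟨hxy, hab⟩)
      · exact Finset.mem_coe.mpr (Finset.mem_union_left _
          (Finset.mem_product.mpr ⟨(hmem y).mpr hadj, Finset.mem_univ _⟩))
      · refine Finset.mem_coe.mpr (Finset.mem_union_right _ (Finset.mem_product.mpr
          ⟨Finset.mem_singleton.mpr hxy.symm, Finset.mem_erase.mpr ⟨fun h => hab h.symm,
            Finset.mem_univ _⟩⟩))
    · intro h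
      rcases Finset.mem_union.mp (Finset.mem_coe.mp h) with h' | h'
      · obtain ⟨h1, -⟩ := Finset.mem_product.mp h'
        exact Or.inl ((hmem y).mp h1)
      · obtain ⟨h1, h2⟩ := Finset.mem_product.mp h'
        have : x = y := (Finset.mem_singleton.mp h1).symm
        exact Or.inr ⟨this, fun h'' => (Finset.mem_erase.mp h2).1 h''.symm⟩
  rw [hset, Set.ncard_coe_finset]
  have hdisj : Disjoint (N ×ˢ (Finset.univ : Finset (Fin t))) ({x} ×ˢ Finset.univ.erase a) := by
    rw [Finset.disjoint_left]
    rintro ⟨y, b⟩ hy hx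
    obtain ⟨hy1, -⟩ := Finset.mem_product.mp hy
    obtain ⟨hx1, -⟩ := Finset.mem_product.mp hx
    exact hxN ((Finset.mem_singleton.mp hx1) ▸ hy1)
  rw [Finset.card_union_of_disjoint hdisj, Finset.card_product, Finset.card_product]
  simp [Finset.card_erase_of_mem (Finset.mem_univ a)]

lemma blowup_reg (hs : 3 ≤ s) (ht : 1 ≤ t) : IsReg (blowup (KssMinus s) t) (s * t - 1) := by
  classical
  rintro ⟨x, a⟩
  have harith : (s - 1) * t + (t - 1) = s * t - 1 := by
    obtain ⟨u, rfl⟩ : ∃ u, s = u + 1 := ⟨s - 1, by omega⟩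
    obtain ⟨v, rfl⟩ : ∃ v, t = v + 1 := ⟨t - 1, by omega⟩
    simp only [Nat.add_sub_cancel]
    have : (u + 1) * (v + 1) = u * (v + 1) + v + 1 := by ring
    omega
  rcases x with i | i
  · have h := reg_aux (KssMinus s) t (Sum.inl i) a
      ((Finset.univ.erase i).map ⟨Sum.inr, fun _ _ => Sum.inr.inj⟩)
      (by simp)
      (by
        rintro (j | j)
        · exact iff_of_false (by simp) (fun h => h)
        · have h1 : Sum.inr j ∈ (Finset.univ.erase i).map
              (⟨Sum.inr, fun _ _ => Sum.inr.inj⟩ : Fin s ↪ Fin s ⊕ Fin s) ↔ j ≠ i := by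
              simp; exact ⟨fun h e => h.1 (congrArg _ e), fun h => ⟨fun e => h (Sum.inr.inj e), j, rfl⟩⟩
          rw [h1]
          exact ⟨fun h => fun e => h e.symm, fun h => fun e => h e.symm⟩)
    rw [h, Finset.card_map, Finset.card_erase_of_mem (Finset.mem_univ i), Finset.card_univ,
      Fintype.card_fin, harith]
  · have h := reg_aux (KssMinus s) t (Sum.inr i) a
      ((Finset.univ.erase i).map ⟨Sum.inl, fun _ _ => Sum.inl.inj⟩)
      (by simp)
      (by
        rintro (j | j)
        · have h1 : Sum.inl j ∈ (Finset.univ.erase i).map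
              (⟨Sum.inl, fun _ _ => Sum.inl.inj⟩ : Fin s ↪ Fin s ⊕ Fin s) ↔ j ≠ i := by
              simp; exact ⟨fun h e => h.1 (congrArg _ e), fun h => ⟨fun e => h (Sum.inl.inj e), j, rfl⟩⟩
          rw [h1]
          exact ⟨fun h => fun e => h e.symm, fun h => fun e => h e.symm⟩
        · exact iff_of_false (by simp) (fun h => h))
    rw [h, Finset.card_map, Finset.card_erase_of_mem (Finset.mem_univ i), Finset.card_univ,
      Fintype.card_fin, harith]

end graphside

/-- For `s ≥ 3` and `t ≥ 1`, `K_{s,s}⁻ ⊛ J_t` is a connected `(st-1)`-regular graph on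
`2st` vertices with spectrum `{[st-1]^1, [-st+2t-1]^1, [2t-1]^{s-1}, [-1]^{2st-s-1}}`. -/
theorem stmt_9 (s t : ℕ) (hs : 3 ≤ s) (ht : 1 ≤ t) :
    (blowup (KssMinus s) t).Connected ∧
    IsReg (blowup (KssMinus s) t) (s * t - 1) ∧
    spec (blowup (KssMinus s) t) =
      {((s : ℝ) * t - 1 : ℝ), (-(s : ℝ) * t + 2 * t - 1 : ℝ)} +
        Multiset.replicate (s - 1) (2 * (t : ℝ) - 1) +
        Multiset.replicate (2 * s * t - s - 1) (-1 : ℝ) := by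
  haveI : NeZero s := ⟨by omega⟩
  haveI : NeZero t := ⟨by omega⟩
  refine ⟨blowup_conn s t hs ht, blowup_reg s t hs ht, ?_⟩
  rw [spec, charpoly_M, dfun_multiset s t hs ht]
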